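/- For every real s>0 and every real α with α > 2s−1, the Laplace transform of the (2s−1)-th power of the hyperbolic sine is ∫_0^∞ e^{−αv} (sinh v)^{2s−1} dv = (Γ(2s)/2^{2s}) · Γ((α+1−2s)/2) / Γ((α+1+2s)/2). -/
import Mathlib

open MeasureTheory Real Set

/-- Real Beta integral: `∫_0^1 x^{a-1}(1-x)^{b-1} dx = Γ(a)Γ(b)/Γ(a+b)` for `a, b > 0`. -/
lemma realBetaIntegral_aux {a b : ℝ} (ha : 0 < a) (hb : 0 < b) :
    ∫ x in Set.Ioo (0:ℝ) 1, x ^ (a - 1) * (1 - x) ^ (b - 1)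
      = Real.Gamma a * Real.Gamma b / Real.Gamma (a + b) := by
  have hC := Complex.Gamma_mul_Gamma_eq_betaIntegral (s := (a:ℂ)) (t := (b:ℂ))
      (by simpa using ha) (by simpa using hb)
  have hbeta : Complex.betaIntegral a b
      = ((∫ x in Set.Ioo (0:ℝ) 1, x ^ (a - 1) * (1 - x) ^ (b - 1) : ℝ) : ℂ) := by
    rw [show (∫ x in Set.Ioo (0:ℝ) 1, x ^ (a - 1) * (1 - x) ^ (b - 1))
        = ∫ x in (0:ℝ)..1, x ^ (a - 1) * (1 - x) ^ (b - 1) from by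
      rw [intervalIntegral.integral_of_le (by norm_num : (0:ℝ) ≤ 1),
        MeasureTheory.integral_Ioc_eq_integral_Ioo]]
    rw [← intervalIntegral.integral_ofReal, Complex.betaIntegral]
    refine intervalIntegral.integral_congr fun x hx => ?_
    rw [Set.uIcc_of_le (by norm_num : (0:ℝ) ≤ 1)] at hx
    rw [show ((a:ℂ) - 1) = ((a - 1 : ℝ) : ℂ) by push_cast; ring,
      show ((b:ℂ) - 1) = ((b - 1 : ℝ) : ℂ) by push_cast; ring,
      show (1 - (x:ℂ)) = ((1 - x : ℝ) : ℂ) by push_cast; ring,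
      ← Complex.ofReal_cpow hx.1,
      ← Complex.ofReal_cpow (by linarith [hx.2] : (0:ℝ) ≤ 1 - x),
      ← Complex.ofReal_mul]
  rw [hbeta] at hC
  have hGab : Real.Gamma (a + b) ≠ 0 := (Real.Gamma_pos_of_pos (by linarith)).ne'
  have : Real.Gamma a * Real.Gamma b
      = Real.Gamma (a + b) * ∫ x in Set.Ioo (0:ℝ) 1, x ^ (a - 1) * (1 - x) ^ (b - 1) := by
    have := hC
    rw [← Complex.ofReal_add, Complex.Gamma_ofReal, Complex.Gamma_ofReal,
      Complex.Gamma_ofReal, ← Complex.ofReal_mul, ← Complex.ofReal_mul] at this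
    exact_mod_cast this
  field_simp
  linarith [this]

/-- Laplace transform of `(sinh v)^{2s−1}`: for `s > 0` and `α > 2s−1`,
`∫_0^∞ e^{−αv} (sinh v)^{2s−1} dv = (Γ(2s)/2^{2s}) · Γ((α+1−2s)/2)/Γ((α+1+2s)/2)`. -/
theorem laplaceTransform_sinh_rpow (s α : ℝ) (hs : 0 < s) (hα : 2 * s - 1 < α) :
    ∫ v in Set.Ioi (0 : ℝ), Real.exp (-α * v) * Real.sinh v ^ (2 * s - 1)
      = Real.Gamma (2 * s) / (2 : ℝ) ^ (2 * s) *
        (Real.Gamma ((α + 1 - 2 * s) / 2) / Real.Gamma ((α + 1 + 2 * s) / 2)) := by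
  set a : ℝ := (α + 1 - 2 * s) / 2 with ha_def
  have ha : 0 < a := by rw [ha_def]; linarith
  have h2s : (0:ℝ) < 2 * s := by linarith
  -- change of variables x = exp (-2 v)
  have himg : (fun v : ℝ => Real.exp (-2 * v)) '' Set.Ioi 0 = Set.Ioo (0:ℝ) 1 := by
    ext x
    constructor
    · rintro ⟨v, hv, rfl⟩
      exact ⟨Real.exp_pos _, Real.exp_lt_one_iff.2 (by simp at hv ⊢; linarith)⟩
    · intro hx
      refine ⟨-Real.log x / 2, ?_, ?_⟩
      · have := Real.log_neg hx.1 hx.2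
        simp only [Set.mem_Ioi]
        linarith
      · show Real.exp (-2 * (-Real.log x / 2)) = x
        rw [show -2 * (-Real.log x / 2) = Real.log x from by ring, Real.exp_log hx.1]
  have hderiv : ∀ v ∈ Set.Ioi (0:ℝ),
      HasDerivWithinAt (fun v : ℝ => Real.exp (-2 * v))
        (Real.exp (-2 * v) * (-2)) (Set.Ioi 0) v := by
    intro v _
    have h1 : HasDerivAt (fun v : ℝ => -2 * v) (-2) v := by
      simpa using (hasDerivAt_id v).const_mul (-2)
    exact (h1.exp).hasDerivWithinAt
  have hinj : Set.InjOn (fun v : ℝ => Real.exp (-2 * v)) (Set.Ioi 0) := by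
    intro v _ w _ h
    have := Real.exp_injective h
    linarith [this]
  have hcv := integral_image_eq_integral_abs_deriv_smul measurableSet_Ioi hderiv hinj
    (fun x => x ^ (a - 1) * (1 - x) ^ (2 * s - 1))
  rw [himg] at hcv
  have key : ∫ v in Set.Ioi (0:ℝ), Real.exp (-α * v) * Real.sinh v ^ (2 * s - 1)
      = (∫ x in Set.Ioo (0:ℝ) 1, x ^ (a - 1) * (1 - x) ^ (2 * s - 1)) / (2:ℝ) ^ (2 * s) := by
    rw [hcv, ← MeasureTheory.integral_div]
    refine setIntegral_congr_fun measurableSet_Ioi fun v hv => ?_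
    have hv0 : (0:ℝ) < v := hv
    set E : ℝ := Real.exp (-2 * v) with hE
    have hE0 : 0 < E := Real.exp_pos _
    have hE1 : E < 1 := Real.exp_lt_one_iff.2 (by linarith)
    have habs : |E * (-2)| = 2 * E := by
      rw [abs_mul, abs_of_pos hE0, show |(-2:ℝ)| = 2 by norm_num]; ring
    have hsinh : Real.sinh v = Real.exp v * ((1 - E) / 2) := by
      rw [Real.sinh_eq, hE]
      rw [show (-2 : ℝ) * v = -v + -v by ring, Real.exp_add]
      rw [show Real.exp v * ((1 - Real.exp (-v) * Real.exp (-v)) / 2)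
          = (Real.exp v - (Real.exp v * Real.exp (-v)) * Real.exp (-v)) / 2 by ring]
      rw [← Real.exp_add]
      norm_num
    have hrpow : Real.sinh v ^ (2 * s - 1)
        = Real.exp v ^ (2 * s - 1) * (1 - E) ^ (2 * s - 1) / 2 ^ (2 * s - 1) := by
      rw [hsinh, Real.mul_rpow (Real.exp_pos v).le (by linarith : (0:ℝ) ≤ (1 - E)/2),
        Real.div_rpow (by linarith) (by norm_num)]
      ring
    show Real.exp (-α * v) * Real.sinh v ^ (2 * s - 1)
        = |E * (-2)| • (E ^ (a - 1) * (1 - E) ^ (2 * s - 1)) / 2 ^ (2 * s)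
    rw [smul_eq_mul, habs, hrpow]
    rw [hE, ← Real.exp_mul, ← Real.exp_mul]
    rw [← mul_div_assoc]
    rw [div_eq_div_iff (by positivity) (by positivity)]
    rw [show (2:ℝ) ^ (2 * s) = 2 ^ (2 * s - 1) * 2 by
      rw [Real.rpow_sub (by norm_num : (0:ℝ) < 2), Real.rpow_one]; field_simp]
    have hexp : Real.exp (-α * v) * Real.exp (v * (2 * s - 1))
        = Real.exp (-2 * v) * Real.exp (-2 * v * (a - 1)) := by
      rw [← Real.exp_add, ← Real.exp_add]
      congr 1
      rw [ha_def]; ring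
    linear_combination (2 * (2:ℝ) ^ (2 * s - 1) * (1 - Real.exp (-2 * v)) ^ (2 * s - 1)) * hexp
  rw [key, realBetaIntegral_aux ha h2s]
  have hab : a + 2 * s = (α + 1 + 2 * s) / 2 := by rw [ha_def]; ring
  rw [hab]
  ring
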